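/- For M = [[a,b],[c,d]] ∈ M₂(ℍ(ℝ)) with c ≠ 0, the Dieudonné determinant satisfies |σ|² = |a|²|d|² + |b|²|c|² - 2 Re(a c̄ d b̄), where σ = c a c⁻¹ d - c b. -/

import Mathlib

open Quaternion

/-- for `M = [[a,b],[c,d]] ∈ M₂(ℍ(ℝ))` with `c ≠ 0`, the pseudo-determinant
`σ = c a c⁻¹ d - c b` satisfies `|σ|² = |a|²|d|² + |b|²|c|² - 2 Re(a c̄ d b̄)`. -/

private lemma re_mul_comm (p q : ℍ[ℝ]) : (p * q).re = (q * p).re := by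
  simp only [Quaternion.re_mul]; ring

theorem stmt4 (a b c d : ℍ[ℝ]) (hc : c ≠ 0) :
    normSq (c * a * c⁻¹ * d - c * b) =
      normSq a * normSq d + normSq b * normSq c -
        2 * (a * star c * d * star b).re := by
  have hns : normSq c ≠ 0 := Quaternion.normSq_ne_zero.2 hc
  set x := c * a * c⁻¹ * d with hx
  set y := c * b with hy
  have expand : normSq (x - y) = normSq x + normSq y - 2 * (x * star y).re := by
    have h1 : (y * star x).re = (x * star y).re := by
      rw [← Quaternion.re_star (y * star x), star_mul, star_star]
    simp only [Quaternion.normSq_def, star_sub, mul_sub, sub_mul, Quaternion.re_sub,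
      Quaternion.re_add, h1]
    ring
  rw [expand]
  have h2 : normSq x = normSq a * normSq d := by
    rw [hx]
    simp only [map_mul, map_inv₀]
    field_simp
  have h3 : (x * star y).re = (a * star c * d * star b).re := by
    have e1 : x * star y = c * (a * c⁻¹ * d * (star b * star c)) := by
      rw [hx, hy, star_mul]; simp only [mul_assoc]
    rw [e1, re_mul_comm]
    have e2 : a * c⁻¹ * d * (star b * star c) * c
        = a * (c⁻¹ * (d * (star b * ((normSq c : ℝ) : ℍ[ℝ])))) := by
      simp only [mul_assoc, Quaternion.star_mul_self]
    rw [e2, Quaternion.inv_def]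
    simp only [smul_mul_assoc, mul_smul_comm, Quaternion.mul_coe_eq_smul,
      Quaternion.re_smul, smul_eq_mul, smul_smul]
    have e3 : (a * star c * d * star b).re = (a * (star c * (d * star b))).re := by
      simp only [mul_assoc]
    rw [e3]
    field_simp
  rw [h2, h3, map_mul]
  ring
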